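/- For all positive integers k and n, there exists a word of length k^n over an alphabet of size k such that every word of length n over that alphabet appears at most once as a factor (a block of consecutive letters) of it. -/
import Mathlib

namespace DB

lemma add_mul_lt {x b A B : ℕ} (hx : x < A) (hb : b < B) : x + b * A < B * A :=
  calc x + b * A < A + b * A := Nat.add_lt_add_right hx _
    _ = (b + 1) * A := by ring
    _ ≤ B * A := Nat.mul_le_mul_right A hb

lemma digits_inj {k : ℕ} (hk : 0 < k) :
    ∀ (N a b : ℕ), a < k ^ N → b < k ^ N →
      (∀ t, t < N → a / k ^ t % k = b / k ^ t % k) → a = b := by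
  intro N
  induction N with
  | zero =>
    intro a b ha hb _
    simp only [pow_zero] at ha hb
    omega
  | succ N ih =>
    intro a b ha hb h
    have h0 := h 0 (Nat.succ_pos N)
    simp only [pow_zero, Nat.div_one] at h0
    have hdiv : a / k = b / k := by
      apply ih
      · exact (Nat.div_lt_iff_lt_mul hk).mpr (by rw [← pow_succ]; exact ha)
      · exact (Nat.div_lt_iff_lt_mul hk).mpr (by rw [← pow_succ]; exact hb)
      · intro t ht
        have := h (t + 1) (by omega)
        rw [Nat.div_div_eq_div_mul, Nat.div_div_eq_div_mul, mul_comm k (k ^ t), ← pow_succ]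
        exact this
    calc a = k * (a / k) + a % k := (Nat.div_add_mod a k).symm
      _ = k * (b / k) + b % k := by rw [hdiv, h0]
      _ = b := Nat.div_add_mod b k

def R {m : ℕ} (σ : Equiv.Perm (Fin m)) (x y : Fin m) : Prop := ∃ i : ℕ, (σ ^ i) x = y

lemma R_refl {m : ℕ} {σ : Equiv.Perm (Fin m)} {x : Fin m} : R σ x x := ⟨0, rfl⟩

lemma R_trans {m : ℕ} {σ : Equiv.Perm (Fin m)} {x y z : Fin m} :
    R σ x y → R σ y z → R σ x z := by
  rintro ⟨i, rfl⟩ ⟨j, rfl⟩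
  exact ⟨j + i, by rw [pow_add]; rfl⟩

lemma R_step {m : ℕ} {σ : Equiv.Perm (Fin m)} {x : Fin m} : R σ x (σ x) :=
  ⟨1, by rw [pow_one]⟩

lemma R_symm {m : ℕ} {σ : Equiv.Perm (Fin m)} {x y : Fin m} : R σ x y → R σ y x := by
  rintro ⟨i, rfl⟩
  refine ⟨orderOf σ * i - i, ?_⟩
  have h1 : orderOf σ * i - i + i = orderOf σ * i :=
    Nat.sub_add_cancel (Nat.le_mul_of_pos_left i (orderOf_pos σ))
  calc (σ ^ (orderOf σ * i - i)) ((σ ^ i) x)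
      = (σ ^ (orderOf σ * i - i) * σ ^ i) x := rfl
    _ = (σ ^ (orderOf σ * i)) x := by rw [← pow_add, h1]
    _ = x := by rw [pow_mul, pow_orderOf_eq_one, one_pow]; rfl

lemma merge_R {m : ℕ} {σ : Equiv.Perm (Fin m)} {e e' : Fin m} (hne : e ≠ e')
    (hR : ¬ R σ e e') :
    (∀ x y, R σ x y → R (σ * Equiv.swap e e') x y) ∧ R (σ * Equiv.swap e e') e e' := by
  classical
  set σ' := σ * Equiv.swap e e' with hσ'def
  have happ : ∀ x, σ' x = σ (Equiv.swap e e' x) := fun x => rfl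
  have hae : σ' e = σ e' := by rw [happ, Equiv.swap_apply_left]
  have hae' : σ' e' = σ e := by rw [happ, Equiv.swap_apply_right]
  have hother : ∀ x, x ≠ e → x ≠ e' → σ' x = σ x := fun x h1 h2 => by
    rw [happ, Equiv.swap_apply_of_ne_of_ne h1 h2]
  have hex : ∃ j, 0 < j ∧ ((σ' ^ j) e = e ∨ (σ' ^ j) e = e') := by
    refine ⟨orderOf σ', orderOf_pos σ', Or.inl ?_⟩
    rw [pow_orderOf_eq_one]; rfl
  set j₀ := Nat.find hex with hj₀def
  obtain ⟨hj₀pos, hj₀⟩ := Nat.find_spec hex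
  have hmin : ∀ t, 0 < t → t < j₀ → (σ' ^ t) e ≠ e ∧ (σ' ^ t) e ≠ e' := by
    intro t ht htj
    have hh := Nat.find_min hex htj
    push_neg at hh
    exact hh ht
  have hchain : ∀ t, 0 < t → t ≤ j₀ → (σ' ^ t) e = (σ ^ t) e' := by
    intro t
    induction t with
    | zero => omega
    | succ t ih =>
      intro _ hle
      rcases Nat.eq_zero_or_pos t with rfl | htpos
      · rw [pow_one, pow_one]; exact hae
      · have ht' : (σ' ^ t) e = (σ ^ t) e' := ih htpos (by omega)
        have hne1 := hmin t htpos (by omega)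
        have h1 : (σ ^ t) e' ≠ e := by rw [← ht']; exact hne1.1
        have h2 : (σ ^ t) e' ≠ e' := by rw [← ht']; exact hne1.2
        calc (σ' ^ (t + 1)) e = σ' ((σ' ^ t) e) := by rw [pow_succ']; rfl
          _ = σ' ((σ ^ t) e') := by rw [ht']
          _ = σ ((σ ^ t) e') := hother _ h1 h2
          _ = (σ ^ (t + 1)) e' := by rw [pow_succ']; rfl
  have hj₀e : (σ' ^ j₀) e = (σ ^ j₀) e' := hchain j₀ hj₀pos le_rfl
  have hkey : R σ' e e' := by
    rcases hj₀ with h | h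
    · exfalso
      apply hR
      apply R_symm
      exact ⟨j₀, by rw [← hj₀e, h]⟩
    · exact ⟨j₀, h⟩
  have hstepR : ∀ x, R σ' x (σ x) := by
    intro x
    by_cases hx : x = e
    · rw [hx]
      have h2 : R σ' e (σ' e') := R_trans hkey R_step
      rwa [hae'] at h2
    by_cases hx' : x = e'
    · rw [hx']
      have h2 : R σ' e' (σ' e) := R_trans (R_symm hkey) R_step
      rwa [hae] at h2
    · exact ⟨1, by rw [pow_one, hother x hx hx']⟩
  refine ⟨?_, hkey⟩
  rintro x y ⟨i, rfl⟩
  induction i generalizing x with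
  | zero => exact R_refl
  | succ i ih =>
    have h3 : (σ ^ (i + 1)) x = (σ ^ i) (σ x) := by rw [pow_succ]; rfl
    rw [h3]
    exact R_trans (hstepR x) (ih (σ x))

lemma conn {k n : ℕ} (hk : 0 < k) (hn : 0 < n) (σ : Equiv.Perm (Fin (k ^ n)))
    (hc : ∀ e : Fin (k ^ n), ((σ e : ℕ)) % k ^ (n - 1) = (e : ℕ) / k)
    (H : ∀ e e' : Fin (k ^ n), (e : ℕ) / k = (e' : ℕ) / k → R σ e e') :
    ∀ x y, R σ x y := by
  have hq0 : 0 < k ^ (n - 1) := pow_pos hk _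
  have hq : k ^ n = k ^ (n - 1) * k := by
    conv_lhs => rw [show n = n - 1 + 1 by omega]
    rw [pow_succ]
  have hdiv : ∀ e : Fin (k ^ n), (e : ℕ) / k < k ^ (n - 1) := fun e => by
    exact (Nat.div_lt_iff_lt_mul hk).mpr (lt_of_lt_of_eq e.isLt hq)
  have hbound : ∀ v a : ℕ, v < k ^ (n - 1) → a < k → v + a * k ^ (n - 1) < k ^ n := by
    intro v a hv ha
    have h1 := add_mul_lt hv ha
    rw [hq, mul_comm (k ^ (n - 1)) k]
    exact h1
  -- steering step
  have steer : ∀ (e : Fin (k ^ n)) (a : ℕ) (ha : a < k),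
      R σ e ⟨(e : ℕ) / k + a * k ^ (n - 1), hbound _ _ (hdiv e) ha⟩ := by
    intro e a ha
    have hfb : ∀ b : Fin k, (e : ℕ) / k * k + (b : ℕ) < k ^ n := by
      intro b
      refine lt_of_lt_of_eq ?_ hq.symm
      calc (e : ℕ) / k * k + (b : ℕ) < (e : ℕ) / k * k + k := Nat.add_lt_add_left b.isLt _
        _ = ((e : ℕ) / k + 1) * k := by ring
        _ ≤ k ^ (n - 1) * k := Nat.mul_le_mul_right k (hdiv e)
    set f : Fin k → Fin (k ^ n) := fun b => ⟨(e : ℕ) / k * k + (b : ℕ), hfb b⟩ with hfdef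
    have hfdiv : ∀ b : Fin k, ((f b : Fin (k ^ n)) : ℕ) / k = (e : ℕ) / k := by
      intro b
      show ((e : ℕ) / k * k + (b : ℕ)) / k = (e : ℕ) / k
      rw [add_comm, Nat.add_mul_div_right _ _ hk, Nat.div_eq_of_lt b.isLt, Nat.zero_add]
    have hRf : ∀ b, R σ e (f b) := fun b => H e (f b) (hfdiv b).symm
    have hmem : ∀ b : Fin k, ((σ (f b) : Fin (k ^ n)) : ℕ) % k ^ (n - 1) = (e : ℕ) / k :=
      fun b => by rw [hc (f b), hfdiv b]
    have hq' : k ^ n = k * k ^ (n - 1) := by rw [hq, mul_comm]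
    have hglt : ∀ b : Fin k, ((σ (f b) : Fin (k ^ n)) : ℕ) / k ^ (n - 1) < k := by
      intro b
      exact (Nat.div_lt_iff_lt_mul hq0).mpr (lt_of_lt_of_eq (σ (f b)).isLt hq')
    set g : Fin k → Fin k := fun b => ⟨((σ (f b) : Fin (k ^ n)) : ℕ) / k ^ (n - 1), hglt b⟩
      with hgdef
    have hval : ∀ b : Fin k, ((σ (f b) : Fin (k ^ n)) : ℕ) = (e : ℕ) / k + (g b : ℕ) * k ^ (n - 1) := by
      intro b
      have h1 := Nat.div_add_mod ((σ (f b) : Fin (k ^ n)) : ℕ) (k ^ (n - 1))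
      rw [hmem b] at h1
      have h2 : (g b : ℕ) = ((σ (f b) : Fin (k ^ n)) : ℕ) / k ^ (n - 1) := rfl
      rw [h2]
      conv_lhs => rw [← h1]
      ring
    have ginj : Function.Injective g := by
      intro b1 b2 hgb
      have hv1 : ((σ (f b1) : Fin (k ^ n)) : ℕ) = ((σ (f b2) : Fin (k ^ n)) : ℕ) := by
        rw [hval b1, hval b2, hgb]
      have hv2 : σ (f b1) = σ (f b2) := Fin.ext hv1
      have hv3 := σ.injective hv2
      have hv4 : (e : ℕ) / k * k + (b1 : ℕ) = (e : ℕ) / k * k + (b2 : ℕ) :=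
        congrArg Fin.val hv3
      exact Fin.ext (by omega)
    obtain ⟨b, hb⟩ := Finite.injective_iff_surjective.mp ginj ⟨a, ha⟩
    have hfin : σ (f b) = ⟨(e : ℕ) / k + a * k ^ (n - 1), hbound _ _ (hdiv e) ha⟩ := by
      apply Fin.ext
      rw [hval b, hb]
    have h5 : R σ e (σ (f b)) := R_trans (hRf b) R_step
    rwa [hfin] at h5
  -- bound for ladder
  have lbound : ∀ (j : ℕ), j ≤ n → ∀ (e : Fin (k ^ n)) (a : ℕ), a < k ^ j →
      (e : ℕ) / k ^ j + a * k ^ (n - j) < k ^ n := by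
    intro j hj e a ha
    have hsplit : k ^ (n - j) * k ^ j = k ^ n := by rw [← pow_add, Nat.sub_add_cancel hj]
    have hdivj : (e : ℕ) / k ^ j < k ^ (n - j) :=
      (Nat.div_lt_iff_lt_mul (pow_pos hk j)).mpr (by rw [hsplit]; exact e.isLt)
    have h1 := add_mul_lt hdivj ha
    have h2 : k ^ j * k ^ (n - j) = k ^ n := by rw [← pow_add, Nat.add_sub_cancel' hj]
    omega
  -- ladder
  have ladder : ∀ (j : ℕ) (hj : j ≤ n), ∀ (e : Fin (k ^ n)) (a : ℕ) (ha : a < k ^ j),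
      R σ e ⟨(e : ℕ) / k ^ j + a * k ^ (n - j), lbound j hj e a ha⟩ := by
    intro j
    induction j with
    | zero =>
      intro _ e a ha
      have ha0 : a = 0 := by simpa using ha
      have : (⟨(e : ℕ) / k ^ 0 + a * k ^ (n - 0), lbound 0 (by omega) e a ha⟩ : Fin (k ^ n)) = e := by
        apply Fin.ext
        simp [ha0]
      rw [this]
      exact R_refl
    | succ j ih =>
      intro hjn e a ha
      have hj : j ≤ n := by omega
      have hmodlt : a % k ^ j < k ^ j := Nat.mod_lt _ (pow_pos hk j)
      have h1 := ih hj e (a % k ^ j) hmodlt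
      have hdlt : a / k ^ j < k := by
        apply (Nat.div_lt_iff_lt_mul (pow_pos hk j)).mpr
        rw [mul_comm, ← pow_succ]
        exact ha
      set y : Fin (k ^ n) := ⟨(e : ℕ) / k ^ j + (a % k ^ j) * k ^ (n - j), lbound j hj e _ hmodlt⟩
        with hydef
      have h2 := steer y (a / k ^ j) hdlt
      -- arithmetic: (y : ℕ) / k + (a / k^j) * k^(n-1) = e / k^(j+1) + a * k^(n-(j+1))
      have hA : k ^ (n - j) = k ^ (n - (j + 1)) * k := by
        rw [← pow_succ]
        congr 1
        omega
      have hQ : k ^ (n - 1) = k ^ (n - (j + 1)) * k ^ j := by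
        rw [← pow_add]
        congr 1
        omega
      have hyval : (y : ℕ) = (e : ℕ) / k ^ j + ((a % k ^ j) * k ^ (n - (j + 1))) * k := by
        show (e : ℕ) / k ^ j + (a % k ^ j) * k ^ (n - j) = _
        rw [hA]
        ring
      have hydiv : (y : ℕ) / k = (e : ℕ) / k ^ (j + 1) + (a % k ^ j) * k ^ (n - (j + 1)) := by
        rw [hyval, Nat.add_mul_div_right _ _ hk, Nat.div_div_eq_div_mul, ← pow_succ]
      have harr : (y : ℕ) / k + (a / k ^ j) * k ^ (n - 1)
          = (e : ℕ) / k ^ (j + 1) + a * k ^ (n - (j + 1)) := by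
        rw [hydiv, hQ]
        have hma : a % k ^ j + k ^ j * (a / k ^ j) = a := Nat.mod_add_div a (k ^ j)
        calc (e : ℕ) / k ^ (j + 1) + (a % k ^ j) * k ^ (n - (j + 1))
              + (a / k ^ j) * (k ^ (n - (j + 1)) * k ^ j)
            = (e : ℕ) / k ^ (j + 1)
              + (a % k ^ j + k ^ j * (a / k ^ j)) * k ^ (n - (j + 1)) := by ring
          _ = (e : ℕ) / k ^ (j + 1) + a * k ^ (n - (j + 1)) := by rw [hma]
      have hfineq : (⟨(y : ℕ) / k + (a / k ^ j) * k ^ (n - 1), hbound _ _ (hdiv y) hdlt⟩ : Fin (k ^ n))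
          = ⟨(e : ℕ) / k ^ (j + 1) + a * k ^ (n - (j + 1)), lbound (j + 1) hjn e a ha⟩ :=
        Fin.ext harr
      rw [hfineq] at h2
      exact R_trans h1 h2
  intro x y
  have h1 := ladder n le_rfl x (y : ℕ) y.isLt
  have h2 : (⟨(x : ℕ) / k ^ n + (y : ℕ) * k ^ (n - n), lbound n le_rfl x _ y.isLt⟩ : Fin (k ^ n)) = y := by
    apply Fin.ext
    simp [Nat.div_eq_of_lt x.isLt]
  rwa [h2] at h1

lemma exists_compat (k n : ℕ) (hk : 0 < k) (hn : 0 < n) :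
    ∃ σ : Equiv.Perm (Fin (k ^ n)),
      ∀ e : Fin (k ^ n), ((σ e : ℕ)) % k ^ (n - 1) = (e : ℕ) / k := by
  have hq0 : 0 < k ^ (n - 1) := pow_pos hk _
  have hq : k ^ n = k ^ (n - 1) * k := by
    conv_lhs => rw [show n = n - 1 + 1 by omega]
    rw [pow_succ]
  have hdiv : ∀ e : Fin (k ^ n), (e : ℕ) / k < k ^ (n - 1) := fun e => by
    exact (Nat.div_lt_iff_lt_mul hk).mpr (lt_of_lt_of_eq e.isLt hq)
  have hbound : ∀ e : Fin (k ^ n), (e : ℕ) / k + ((e : ℕ) % k) * k ^ (n - 1) < k ^ n := by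
    intro e
    refine lt_of_lt_of_eq ?_ (by rw [hq, mul_comm (k ^ (n - 1)) k])
    exact add_mul_lt (hdiv e) (Nat.mod_lt _ hk)
  set f : Fin (k ^ n) → Fin (k ^ n) :=
    fun e => ⟨(e : ℕ) / k + ((e : ℕ) % k) * k ^ (n - 1), hbound e⟩ with hfdef
  have hinj : Function.Injective f := by
    intro a b hab
    have h := congrArg Fin.val hab
    simp only [hfdef] at h
    have ha1 := hdiv a
    have hb1 := hdiv b
    have hmod : ((a : ℕ) / k + ((a : ℕ) % k) * k ^ (n - 1)) % k ^ (n - 1) = (a : ℕ) / k := by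
      rw [Nat.add_mul_mod_self_right, Nat.mod_eq_of_lt ha1]
    have hmod' : ((b : ℕ) / k + ((b : ℕ) % k) * k ^ (n - 1)) % k ^ (n - 1) = (b : ℕ) / k := by
      rw [Nat.add_mul_mod_self_right, Nat.mod_eq_of_lt hb1]
    have hdeq : (a : ℕ) / k = (b : ℕ) / k := by rw [← hmod, ← hmod', h]
    have hmul : ((a : ℕ) % k) * k ^ (n - 1) = ((b : ℕ) % k) * k ^ (n - 1) := by omega
    have hmeq : (a : ℕ) % k = (b : ℕ) % k := Nat.eq_of_mul_eq_mul_right hq0 hmul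
    have e1 := Nat.div_add_mod (a : ℕ) k
    have e2 := Nat.div_add_mod (b : ℕ) k
    apply Fin.ext
    calc (a : ℕ) = k * ((a : ℕ) / k) + (a : ℕ) % k := e1.symm
      _ = k * ((b : ℕ) / k) + (b : ℕ) % k := by rw [hdeq, hmeq]
      _ = (b : ℕ) := e2
  refine ⟨Equiv.ofBijective f (Finite.injective_iff_bijective.mp hinj), fun e => ?_⟩
  rw [Equiv.ofBijective_apply]
  show ((e : ℕ) / k + ((e : ℕ) % k) * k ^ (n - 1)) % k ^ (n - 1) = (e : ℕ) / k
  rw [Nat.add_mul_mod_self_right, Nat.mod_eq_of_lt (hdiv e)]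

lemma exists_good (k n : ℕ) (hk : 0 < k) (hn : 0 < n) :
    ∃ σ : Equiv.Perm (Fin (k ^ n)),
      (∀ e : Fin (k ^ n), ((σ e : ℕ)) % k ^ (n - 1) = (e : ℕ) / k) ∧ ∀ x y, R σ x y := by
  classical
  have key : ∀ (c : ℕ) (σ : Equiv.Perm (Fin (k ^ n))),
      (∀ e : Fin (k ^ n), ((σ e : ℕ)) % k ^ (n - 1) = (e : ℕ) / k) →
      (Finset.univ.filter
        (fun p : Fin (k ^ n) × Fin (k ^ n) => ¬ R σ p.1 p.2)).card ≤ c →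
      ∃ σ' : Equiv.Perm (Fin (k ^ n)),
        (∀ e : Fin (k ^ n), ((σ' e : ℕ)) % k ^ (n - 1) = (e : ℕ) / k) ∧ ∀ x y, R σ' x y := by
    intro c
    induction c with
    | zero =>
      intro σ hσ hcard
      refine ⟨σ, hσ, ?_⟩
      by_contra hcon
      push_neg at hcon
      obtain ⟨x, y, hxy⟩ := hcon
      have hmem : (x, y) ∈ Finset.univ.filter
          (fun p : Fin (k ^ n) × Fin (k ^ n) => ¬ R σ p.1 p.2) := by
        simp [hxy]
      have := Finset.card_pos.mpr ⟨_, hmem⟩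
      omega
    | succ c ih =>
      intro σ hσ hcard
      by_cases htot : ∀ x y, R σ x y
      · exact ⟨σ, hσ, htot⟩
      · have hH : ¬ ∀ e e' : Fin (k ^ n), (e : ℕ) / k = (e' : ℕ) / k → R σ e e' :=
          fun hH' => htot (conn hk hn σ hσ hH')
        push_neg at hH
        obtain ⟨e, e', hv, hR⟩ := hH
        have hne : e ≠ e' := by rintro rfl; exact hR R_refl
        obtain ⟨hmono, hkey⟩ := merge_R hne hR
        have hσ' : ∀ x : Fin (k ^ n),
            (((σ * Equiv.swap e e') x : ℕ)) % k ^ (n - 1) = (x : ℕ) / k := by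
          intro x
          by_cases hx : x = e
          · rw [hx]
            have h1 : (σ * Equiv.swap e e') e = σ e' := by
              rw [Equiv.Perm.mul_apply, Equiv.swap_apply_left]
            rw [h1, hσ e', ← hv]
          by_cases hx' : x = e'
          · rw [hx']
            have h1 : (σ * Equiv.swap e e') e' = σ e := by
              rw [Equiv.Perm.mul_apply, Equiv.swap_apply_right]
            rw [h1, hσ e, hv]
          · have h1 : (σ * Equiv.swap e e') x = σ x := by
              rw [Equiv.Perm.mul_apply, Equiv.swap_apply_of_ne_of_ne hx hx']
            rw [h1, hσ x]
        apply ih (σ * Equiv.swap e e') hσ'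
        have hsub : Finset.univ.filter
            (fun p : Fin (k ^ n) × Fin (k ^ n) => ¬ R (σ * Equiv.swap e e') p.1 p.2)
            ⊆ Finset.univ.filter
            (fun p : Fin (k ^ n) × Fin (k ^ n) => ¬ R σ p.1 p.2) := by
          intro p hp
          simp only [Finset.mem_filter, Finset.mem_univ, true_and] at hp ⊢
          exact fun hRp => hp (hmono _ _ hRp)
        have hss : Finset.univ.filter
            (fun p : Fin (k ^ n) × Fin (k ^ n) => ¬ R (σ * Equiv.swap e e') p.1 p.2)
            ⊂ Finset.univ.filter
            (fun p : Fin (k ^ n) × Fin (k ^ n) => ¬ R σ p.1 p.2) := by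
          refine ⟨hsub, fun hsub' => ?_⟩
          have hmem : (e, e') ∈ Finset.univ.filter
              (fun p : Fin (k ^ n) × Fin (k ^ n) => ¬ R σ p.1 p.2) := by simp [hR]
          have := hsub' hmem
          simp only [Finset.mem_filter, Finset.mem_univ, true_and] at this
          exact this hkey
        have := Finset.card_lt_card hss
        omega
  obtain ⟨σ₀, hσ₀⟩ := exists_compat k n hk hn
  exact key _ σ₀ hσ₀ le_rfl

end DB

open DB in
/-- Existence of (k,n)-de Bruijn words (non-circular, at-most-once form): for all positive
integers `k` and `n` there is a word of length `k ^ n` over an alphabet of size `k` in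
which every word of length `n` appears at most once as a factor, i.e. any two occurrences
of the same length-`n` factor are at the same position. -/
theorem stmt_6 (k n : ℕ) (hk : 0 < k) (hn : 0 < n) :
    ∃ w : List (Fin k), w.length = k ^ n ∧
      ∀ i j : ℕ, i + n ≤ w.length → j + n ≤ w.length →
        (w.drop i).take n = (w.drop j).take n → i = j := by
  obtain ⟨σ, hσ, hT⟩ := exists_good k n hk hn
  have hm0 : 0 < k ^ n := pow_pos hk n
  set z : Fin (k ^ n) := ⟨0, hm0⟩ with hzdef
  set E : ℕ → Fin (k ^ n) := fun i => (σ ^ i) z with hEdef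
  set f : Fin (k ^ n) → Fin k := fun x => ⟨((E (x : ℕ)) : ℕ) % k, Nat.mod_lt _ hk⟩ with hfdef
  refine ⟨List.ofFn f, by simp, ?_⟩
  intro i j hi hj heq
  rw [List.length_ofFn] at hi hj
  have hstep : ∀ i' : ℕ, E (i' + 1) = σ (E i') := by
    intro i'
    show (σ ^ (i' + 1)) z = σ ((σ ^ i') z)
    rw [pow_succ']
    rfl
  have claimC : ∀ (i' t : ℕ), t ≤ n →
      ((E (i' + t)) : ℕ) % k ^ (n - t) = ((E i') : ℕ) / k ^ t := by
    intro i' t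
    induction t with
    | zero =>
      intro _
      simpa using Nat.mod_eq_of_lt (E i').isLt
    | succ t ih =>
      intro ht
      have htn : t ≤ n := by omega
      have h1 : ((E (i' + t + 1)) : ℕ) % k ^ (n - 1) = ((E (i' + t)) : ℕ) / k := by
        rw [hstep (i' + t)]
        exact hσ (E (i' + t))
      have hdvd : k ^ (n - (t + 1)) ∣ k ^ (n - 1) := pow_dvd_pow k (by omega)
      have haddeq : i' + (t + 1) = i' + t + 1 := by omega
      calc ((E (i' + (t + 1))) : ℕ) % k ^ (n - (t + 1))
          = ((E (i' + t + 1)) : ℕ) % k ^ (n - 1) % k ^ (n - (t + 1)) := by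
            rw [haddeq, Nat.mod_mod_of_dvd _ hdvd]
        _ = ((E (i' + t)) : ℕ) / k % k ^ (n - (t + 1)) := by rw [h1]
        _ = ((E (i' + t)) : ℕ) % (k * k ^ (n - (t + 1))) / k := by
            rw [Nat.mod_mul_right_div_self]
        _ = ((E (i' + t)) : ℕ) % k ^ (n - t) / k := by
            rw [← pow_succ', show n - (t + 1) + 1 = n - t by omega]
        _ = ((E i') : ℕ) / k ^ t / k := by rw [ih htn]
        _ = ((E i') : ℕ) / k ^ (t + 1) := by rw [Nat.div_div_eq_div_mul, ← pow_succ]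
  have digit : ∀ (i' t : ℕ), t < n → ((E (i' + t)) : ℕ) % k = ((E i') : ℕ) / k ^ t % k := by
    intro i' t ht
    have h1 : k ∣ k ^ (n - t) := dvd_pow_self k (by omega)
    rw [← Nat.mod_mod_of_dvd _ h1, claimC i' t (le_of_lt ht)]
  -- extract pointwise equality from window equality
  have hw : ∀ t, t < n → ((E (i + t)) : ℕ) % k = ((E (j + t)) : ℕ) % k := by
    intro t ht
    have hti : t < (((List.ofFn f).drop i).take n).length := by
      simp only [List.length_take, List.length_drop, List.length_ofFn]
      omega
    have htj : t < (((List.ofFn f).drop j).take n).length := by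
      simp only [List.length_take, List.length_drop, List.length_ofFn]
      omega
    have h1 : (((List.ofFn f).drop i).take n)[t]'hti = (((List.ofFn f).drop j).take n)[t]'htj :=
      List.getElem_of_eq heq hti
    rw [List.getElem_take, List.getElem_drop, List.getElem_take, List.getElem_drop,
      List.getElem_ofFn, List.getElem_ofFn] at h1
    have h2 := congrArg Fin.val h1
    simpa using h2
  have hdigs : ∀ t, t < n → ((E i) : ℕ) / k ^ t % k = ((E j) : ℕ) / k ^ t % k := by
    intro t ht
    rw [← digit i t ht, ← digit j t ht]
    exact hw t ht
  have hEij : E i = E j :=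
    Fin.ext (digits_inj hk n _ _ (E i).isLt (E j).isLt hdigs)
  -- injectivity of E below k ^ n
  have hper : ∀ (x : Fin (k ^ n)) (d : ℕ), (σ ^ d) x = x →
      ∀ t : ℕ, (σ ^ t) x = (σ ^ (t % d)) x := by
    intro x d hd t
    have hfixs : ∀ s : ℕ, ((σ ^ d) ^ s) x = x := by
      intro s
      induction s with
      | zero => rfl
      | succ s ihs => rw [pow_succ]; show ((σ ^ d) ^ s) ((σ ^ d) x) = x; rw [hd, ihs]
    conv_lhs => rw [← Nat.mod_add_div t d]
    rw [pow_add]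
    show (σ ^ (t % d)) ((σ ^ (d * (t / d))) x) = _
    rw [pow_mul, hfixs (t / d)]
  have hinj : ∀ a b : ℕ, a < k ^ n → b < k ^ n → E a = E b → a = b := by
    have main : ∀ a b : ℕ, a ≤ b → b < k ^ n → E a = E b → a = b := by
      intro a b hab hbm hE
      by_contra hne
      have hd : 0 < b - a := by omega
      have hfix : (σ ^ (b - a)) (E a) = E a := by
        have h1 : (σ ^ (b - a)) (E a) = E b := by
          show (σ ^ (b - a)) ((σ ^ a) z) = (σ ^ b) z
          rw [show (σ ^ (b - a)) ((σ ^ a) z) = (σ ^ (b - a) * σ ^ a) z from rfl, ← pow_add]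
          congr 2
          omega
        rw [h1, ← hE]
      have horb : ∀ y : Fin (k ^ n), ∃ r, r < b - a ∧ (σ ^ r) (E a) = y := by
        intro y
        obtain ⟨t, ht⟩ := hT (E a) y
        exact ⟨t % (b - a), Nat.mod_lt _ hd, by rw [← hper (E a) (b - a) hfix t, ht]⟩
      have hcov : (Finset.univ : Finset (Fin (k ^ n))) ⊆
          (Finset.range (b - a)).image (fun r => (σ ^ r) (E a)) := by
        intro y _
        obtain ⟨r, hr, hry⟩ := horb y
        exact Finset.mem_image.mpr ⟨r, Finset.mem_range.mpr hr, hry⟩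
      have h1 := Finset.card_le_card hcov
      rw [Finset.card_univ, Fintype.card_fin] at h1
      have h2 := Finset.card_image_le (s := Finset.range (b - a))
        (f := fun r => (σ ^ r) (E a))
      rw [Finset.card_range] at h2
      omega
    intro a b ham hbm hE
    rcases le_total a b with h | h
    · exact main a b h hbm hE
    · exact (main b a h ham hE.symm).symm
  exact hinj i j (by omega) (by omega) hEij
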